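/- arXiv:1607.04350 — 4 statements merged into one kernel-verified Lean document; each statement's English description precedes it below -/
import Mathlib

section
/- For integers M ≥ 2 and N ≥ 2, the lower bound N/(M(N−1)+1) is at most the upper bound (N(M−1)/(M^N − 1))^{1/(N−1)}, with equality when N = 2. -/
lemma binom_aux (a : ℝ) (ha : 0 ≤ a) : ∀ k : ℕ, a^(k+1) + (k+1)*a^k ≤ (a+1)^(k+1) := by
  intro k
  induction k with
  | zero => norm_num
  | succ k ih =>
    have hk : 0 ≤ a^k := pow_nonneg ha k
    have h2 : (a+1) * (a^(k+1) + ((k:ℝ)+1)*a^k) ≤ (a+1) * (a+1)^(k+1) :=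
      mul_le_mul_of_nonneg_left ih (by linarith)
    have e3 : a ^ (k+1) = a^k * a := pow_succ a k
    have e4 : a ^ (k+1+1) = a^(k+1) * a := pow_succ a (k+1)
    have e5 : (a+1) ^ (k+1+1) = (a+1)^(k+1) * (a+1) := pow_succ (a+1) (k+1)
    push_cast
    nlinarith [pow_nonneg ha (k+1)]

lemma nat4 : ∀ n : ℕ, 4*(n+3)^(n+1) ≤ 3*(n+2)^(n+2) := by
  intro n
  induction n with
  | zero => norm_num
  | succ n ih =>
    have hpos : 0 < (n+3)^(n+1) := by positivity
    apply Nat.le_of_mul_le_mul_left _ hpos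
    calc (n+3)^(n+1) * (4*(n+1+3)^(n+1+1))
        = 4*(n+3)^(n+1)*(n+4)^(n+2) := by ring
      _ ≤ 3*(n+2)^(n+2)*(n+4)^(n+2) := by
          have := Nat.mul_le_mul_right ((n+4)^(n+2)) ih
          linarith
      _ = 3*((n+2)*(n+4))^(n+2) := by rw [mul_pow]; ring
      _ ≤ 3*((n+3)*(n+3))^(n+2) := by
          apply Nat.mul_le_mul_left
          apply Nat.pow_le_pow_left; nlinarith
      _ = (n+3)^(n+1) * (3*(n+1+2)^(n+1+2)) := by
          rw [mul_pow]; ring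

lemma key (M : ℝ) (hM : 2 ≤ M) (n : ℕ) :
    ((n:ℝ)+3)^(n+2) * (M^(n+3) - 1) ≤ ((n:ℝ)+3) * (M-1) * (M*((n:ℝ)+2)+1)^(n+2) := by
  have hM0 : (0:ℝ) ≤ M := by linarith
  have hK0 : (0:ℝ) ≤ ((n:ℝ)+2) * M := by positivity
  have hb := binom_aux (((n:ℝ)+2)*M) hK0 (n+1)
  have hDge : ((n:ℝ)+2)^(n+2) * (M^(n+2) + M^(n+1)) ≤ (M*((n:ℝ)+2)+1)^(n+2) := by
    have e1 : (((n:ℝ)+2)*M)^(n+1+1) = ((n:ℝ)+2)^(n+1+1) * M^(n+1+1) := mul_pow _ _ _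
    have e2 : (((n:ℝ)+2)*M)^(n+1) = ((n:ℝ)+2)^(n+1) * M^(n+1) := mul_pow _ _ _
    rw [e1, e2] at hb
    have h1 : ((n:ℝ)+2)^(n+2) * (M^(n+2) + M^(n+1))
        = ((n:ℝ)+2)^(n+1+1) * M^(n+1+1) + (((n+1:ℕ):ℝ)+1) * (((n:ℝ)+2)^(n+1) * M^(n+1)) := by
      push_cast; ring
    have h2 : M*((n:ℝ)+2)+1 = ((n:ℝ)+2)*M+1 := by ring
    rw [h1, h2]
    exact hb
  have h43 : 4*((n:ℝ)+3)^(n+1) ≤ 3*((n:ℝ)+2)^(n+2) := by exact_mod_cast nat4 n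
  have hA : (0:ℝ) ≤ ((n:ℝ)+3)^(n+1) := by positivity
  have hcore : ((n:ℝ)+3)^(n+1) * M^2 ≤ ((n:ℝ)+2)^(n+2) * (M^2 - 1) := by
    nlinarith [mul_nonneg (by linarith : (0:ℝ) ≤ 3*((n:ℝ)+2)^(n+2)-4*((n:ℝ)+3)^(n+1))
        (by nlinarith : (0:ℝ) ≤ M^2-1),
      mul_nonneg hA (by nlinarith : (0:ℝ) ≤ M^2-4)]
  have hM1 : (0:ℝ) ≤ M^(n+1) := by positivity
  calc ((n:ℝ)+3)^(n+2) * (M^(n+3) - 1)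
      ≤ ((n:ℝ)+3)^(n+2) * M^(n+3) := by
        have : (0:ℝ) ≤ ((n:ℝ)+3)^(n+2) := by positivity
        nlinarith
    _ = ((n:ℝ)+3) * (((n:ℝ)+3)^(n+1) * M^2) * M^(n+1) := by ring
    _ ≤ ((n:ℝ)+3) * (((n:ℝ)+2)^(n+2) * (M^2-1)) * M^(n+1) := by
        apply mul_le_mul_of_nonneg_right _ hM1
        apply mul_le_mul_of_nonneg_left hcore (by positivity)
    _ = ((n:ℝ)+3) * (M-1) * (((n:ℝ)+2)^(n+2) * (M^(n+2) + M^(n+1))) := by ring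
    _ ≤ ((n:ℝ)+3) * (M-1) * (M*((n:ℝ)+2)+1)^(n+2) := by
        apply mul_le_mul_of_nonneg_left hDge
        have : (0:ℝ) ≤ M - 1 := by linarith
        positivity

theorem lower_le_upper (M N : ℕ) (hM : 2 ≤ M) (hN : 2 ≤ N) :
    (N : ℝ) / ((M : ℝ) * (N - 1) + 1) ≤
      (((N : ℝ) * ((M : ℝ) - 1)) / ((M : ℝ) ^ N - 1)) ^ ((1 : ℝ) / (N - 1)) ∧
    (N = 2 →
      (N : ℝ) / ((M : ℝ) * (N - 1) + 1) =
        (((N : ℝ) * ((M : ℝ) - 1)) / ((M : ℝ) ^ N - 1)) ^ ((1 : ℝ) / (N - 1))) := by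
  have hMR : (2:ℝ) ≤ (M:ℝ) := by exact_mod_cast hM
  obtain ⟨k, rfl⟩ : ∃ k, N = k + 2 := ⟨N - 2, by omega⟩
  have hNc : ((k+2:ℕ):ℝ) = (k:ℝ)+2 := by push_cast; ring
  have hpow1 : (1:ℝ) < (M:ℝ)^(k+2) := one_lt_pow₀ (by linarith) (by omega)
  have hD : (0:ℝ) < (M:ℝ)*(((k+2:ℕ):ℝ)-1)+1 := by
    rw [hNc]
    nlinarith [Nat.cast_nonneg (α := ℝ) k]
  have hkeyP : ((k+2:ℕ):ℝ)^(k+1) * ((M:ℝ)^(k+2) - 1)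
      ≤ ((k+2:ℕ):ℝ)*((M:ℝ)-1)*((M:ℝ)*(((k+2:ℕ):ℝ)-1)+1)^(k+1) := by
    rw [hNc]
    cases k with
    | zero => norm_num; nlinarith
    | succ j =>
      have := key (M:ℝ) hMR j
      push_cast
      have e : (M:ℝ)*((j:ℝ)+1+2-1)+1 = (M:ℝ)*((j:ℝ)+2)+1 := by ring
      have e2 : (j:ℝ)+1+2 = (j:ℝ)+3 := by ring
      rw [e, e2]
      exact this
  have hfrac : (((k+2:ℕ):ℝ)/((M:ℝ)*(((k+2:ℕ):ℝ)-1)+1))^(k+1)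
      ≤ ((k+2:ℕ):ℝ)*((M:ℝ)-1)/((M:ℝ)^(k+2) - 1) := by
    rw [div_pow, div_le_div_iff₀ (by positivity) (by linarith)]
    calc ((k+2:ℕ):ℝ)^(k+1) * ((M:ℝ)^(k+2) - 1)
        ≤ ((k+2:ℕ):ℝ)*((M:ℝ)-1)*((M:ℝ)*(((k+2:ℕ):ℝ)-1)+1)^(k+1) := hkeyP
      _ = ((k+2:ℕ):ℝ)*((M:ℝ)-1)*(((M:ℝ)*(((k+2:ℕ):ℝ)-1)+1)^(k+1)) := by ring
  have hL0 : (0:ℝ) ≤ ((k+2:ℕ):ℝ)/((M:ℝ)*(((k+2:ℕ):ℝ)-1)+1) := by positivity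
  have hne : ((k+2:ℕ):ℝ) - 1 ≠ 0 := by rw [hNc]; intro h; nlinarith [Nat.cast_nonneg (α := ℝ) k]
  have hexp0 : (0:ℝ) ≤ (1:ℝ)/(((k+2:ℕ):ℝ)-1) := by
    rw [hNc]
    have hk0 : (0:ℝ) ≤ (k:ℝ) := Nat.cast_nonneg k
    apply div_nonneg (by norm_num)
    linarith
  have step : ((((k+2:ℕ):ℝ)/((M:ℝ)*(((k+2:ℕ):ℝ)-1)+1))^(k+1) : ℝ)
        ^ ((1:ℝ)/(((k+2:ℕ):ℝ)-1))
      = ((k+2:ℕ):ℝ)/((M:ℝ)*(((k+2:ℕ):ℝ)-1)+1) := by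
    rw [← Real.rpow_natCast (((k+2:ℕ):ℝ)/((M:ℝ)*(((k+2:ℕ):ℝ)-1)+1)) (k+1),
      ← Real.rpow_mul hL0]
    have : ((k+1:ℕ):ℝ) * ((1:ℝ)/(((k+2:ℕ):ℝ)-1)) = 1 := by
      rw [hNc]; push_cast
      have h : ((k:ℝ)+2)-1 = (k:ℝ)+1 := by ring
      have h0 : (k:ℝ)+1 ≠ 0 := by positivity
      rw [h, mul_one_div, div_self h0]
    rw [this, Real.rpow_one]
  constructor
  · have hmono := Real.rpow_le_rpow (by positivity) hfrac hexp0
    rw [step] at hmono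
    exact hmono
  · intro heq
    have hk0 : k = 0 := by omega
    subst hk0
    have h1 : (M:ℝ) + 1 ≠ 0 := by linarith
    have h2 : (M:ℝ)^2 - 1 ≠ 0 := by nlinarith
    norm_num
    rw [div_eq_div_iff (by linarith) (by nlinarith)]
    ring
end

section
/- Monotonicity of LHV simulability in detector efficiency: if 0 < η1 < η2 ≤ 1 and the efficiency-η2 version p^{NS}_{η2} of a no-signaling distribution p^{NS} admits an LHV model, then the efficiency-η1 version p^{NS}_{η1} also admits an LHV model. -/
/-- The detector-efficiency-`η` version of a bipartite no-signaling distribution `p`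
with single-party marginals `pA`, `pB`; `none` is the non-detection outcome Φ. -/
def effDist {A B X Y : Type} (p : A → B → X → Y → ℝ)
    (pA : A → X → ℝ) (pB : B → Y → ℝ) (η : ℝ) :
    Option A → Option B → X → Y → ℝ
  | some a, some b, x, y => η ^ 2 * p a b x y
  | some a, none, x, _ => η * (1 - η) * pA a x
  | none, some b, _, y => η * (1 - η) * pB b y
  | none, none, _, _ => (1 - η) ^ 2

/-- A distribution over outcomes (including Φ) admits a local hidden variable model. -/
def IsLHV {A B X Y : Type} [Fintype A] [Fintype B]
    (q : Option A → Option B → X → Y → ℝ) : Prop :=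
  ∃ (n : ℕ) (μ : Fin n → ℝ) (pa : Option A → X → Fin n → ℝ)
      (pb : Option B → Y → Fin n → ℝ),
    (∀ l, 0 ≤ μ l) ∧ (∑ l, μ l = 1) ∧
    (∀ a x l, 0 ≤ pa a x l) ∧ (∀ x l, ∑ a : Option A, pa a x l = 1) ∧
    (∀ b y l, 0 ≤ pb b y l) ∧ (∀ y l, ∑ b : Option B, pb b y l = 1) ∧
    (∀ a b x y, q a b x y = ∑ l, μ l * pa a x l * pb b y l)

theorem lhv_monotone_in_efficiency {A B X Y : Type} [Fintype A] [Fintype B]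
    (p : A → B → X → Y → ℝ) (pA : A → X → ℝ) (pB : B → Y → ℝ)
    (hpos : ∀ a b x y, 0 ≤ p a b x y)
    (hnorm : ∀ x y, ∑ a : A, ∑ b : B, p a b x y = 1)
    (hA : ∀ a x y, pA a x = ∑ b : B, p a b x y)
    (hB : ∀ b x y, pB b y = ∑ a : A, p a b x y)
    (η1 η2 : ℝ) (h1 : 0 < η1) (h12 : η1 < η2) (h2 : η2 ≤ 1)
    (hLHV : IsLHV (effDist p pA pB η2)) :
    IsLHV (effDist p pA pB η1) := by
  obtain ⟨n, μ, pa, pb, hμ0, hμ1, hpa0, hpa1, hpb0, hpb1, hq⟩ := hLHV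
  have hη2 : 0 < η2 := h1.trans h12
  set t : ℝ := η1 / η2 with ht
  have ht0 : 0 ≤ t := div_nonneg h1.le hη2.le
  have ht1 : t ≤ 1 := by rw [ht, div_le_one hη2]; exact h12.le
  have htη : t * η2 = η1 := div_mul_cancel₀ η1 hη2.ne'
  -- new response functions
  refine ⟨n, μ,
    (fun a x l => match a with
      | some a => t * pa (some a) x l
      | none => 1 - t * (1 - pa none x l)),
    (fun b y l => match b with
      | some b => t * pb (some b) y l
      | none => 1 - t * (1 - pb none y l)),
    hμ0, hμ1, ?_, ?_, ?_, ?_, ?_⟩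
  · rintro (_ | a) x l
    · have hle : pa none x l ≤ 1 := by
        have := hpa1 x l
        have hmem : (none : Option A) ∈ (Finset.univ : Finset (Option A)) :=
          Finset.mem_univ _
        calc pa none x l ≤ ∑ a : Option A, pa a x l :=
              Finset.single_le_sum (fun a _ => hpa0 a x l) hmem
          _ = 1 := this
      simp only
      nlinarith [hpa0 none x l]
    · exact mul_nonneg ht0 (hpa0 _ x l)
  · intro x l
    have h := hpa1 x l
    rw [Fintype.sum_option] at h ⊢
    simp only
    rw [← Finset.mul_sum]
    have h2' : ∑ a : A, pa (some a) x l = 1 - pa none x l := by linarith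
    rw [h2']; ring
  · rintro (_ | b) y l
    · have hle : pb none y l ≤ 1 := by
        have := hpb1 y l
        have hmem : (none : Option B) ∈ (Finset.univ : Finset (Option B)) :=
          Finset.mem_univ _
        calc pb none y l ≤ ∑ b : Option B, pb b y l :=
              Finset.single_le_sum (fun b _ => hpb0 b y l) hmem
          _ = 1 := this
      simp only
      nlinarith [hpb0 none y l]
    · exact mul_nonneg ht0 (hpb0 _ y l)
  · intro y l
    have h := hpb1 y l
    rw [Fintype.sum_option] at h ⊢
    simp only
    rw [← Finset.mul_sum]
    have h2' : ∑ b : B, pb (some b) y l = 1 - pb none y l := by linarith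
    rw [h2']; ring
  · intro a b x y
    -- marginal facts at fixed x, y
    have hSa : ∀ a : A, ∑ l, μ l * pa (some a) x l = η2 * pA a x := by
      intro a
      have hswap : ∑ l, μ l * pa (some a) x l
          = ∑ b : Option B, ∑ l, μ l * pa (some a) x l * pb b y l := by
        rw [Finset.sum_comm]
        refine Finset.sum_congr rfl fun l _ => ?_
        rw [← Finset.mul_sum, hpb1, mul_one]
      have : ∑ b : Option B, ∑ l, μ l * pa (some a) x l * pb b y l
          = ∑ b : Option B, effDist p pA pB η2 (some a) b x y := by
        refine Finset.sum_congr rfl fun b _ => (hq (some a) b x y).symm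
      rw [hswap, this, Fintype.sum_option]
      simp only [effDist]
      rw [← Finset.mul_sum, ← hA a x y]
      ring
    have hSb : ∀ b : B, ∑ l, μ l * pb (some b) y l = η2 * pB b y := by
      intro b
      have hswap : ∑ l, μ l * pb (some b) y l
          = ∑ a : Option A, ∑ l, μ l * pa a x l * pb (some b) y l := by
        rw [Finset.sum_comm]
        refine Finset.sum_congr rfl fun l _ => ?_
        have : ∑ a : Option A, μ l * pa a x l * pb (some b) y l
            = (∑ a : Option A, pa a x l) * (μ l * pb (some b) y l) := by
          rw [Finset.sum_mul]
          refine Finset.sum_congr rfl fun a _ => by ring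
        rw [this, hpa1, one_mul]
      have : ∑ a : Option A, ∑ l, μ l * pa a x l * pb (some b) y l
          = ∑ a : Option A, effDist p pA pB η2 a (some b) x y := by
        refine Finset.sum_congr rfl fun a _ => (hq a (some b) x y).symm
      rw [hswap, this, Fintype.sum_option]
      simp only [effDist]
      rw [← Finset.mul_sum, ← hB b x y]
      ring
    have hpBsum : ∑ b : B, pB b y = 1 := by
      have : ∑ b : B, pB b y = ∑ b : B, ∑ a : A, p a b x y :=
        Finset.sum_congr rfl fun b _ => hB b x y
      rw [this, Finset.sum_comm, hnorm]
    have hpAsum : ∑ a : A, pA a x = 1 := by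
      have : ∑ a : A, pA a x = ∑ a : A, ∑ b : B, p a b x y :=
        Finset.sum_congr rfl fun a _ => hA a x y
      rw [this, hnorm]
    have hS0a : ∑ l, μ l * pa none x l = 1 - η2 := by
      have hswap : ∑ l, μ l * pa none x l
          = ∑ b : Option B, ∑ l, μ l * pa none x l * pb b y l := by
        rw [Finset.sum_comm]
        refine Finset.sum_congr rfl fun l _ => ?_
        rw [← Finset.mul_sum, hpb1, mul_one]
      have : ∑ b : Option B, ∑ l, μ l * pa none x l * pb b y l
          = ∑ b : Option B, effDist p pA pB η2 none b x y := by
        refine Finset.sum_congr rfl fun b _ => (hq none b x y).symm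
      rw [hswap, this, Fintype.sum_option]
      simp only [effDist]
      rw [← Finset.mul_sum, hpBsum]
      ring
    have hS0b : ∑ l, μ l * pb none y l = 1 - η2 := by
      have hswap : ∑ l, μ l * pb none y l
          = ∑ a : Option A, ∑ l, μ l * pa a x l * pb none y l := by
        rw [Finset.sum_comm]
        refine Finset.sum_congr rfl fun l _ => ?_
        have : ∑ a : Option A, μ l * pa a x l * pb none y l
            = (∑ a : Option A, pa a x l) * (μ l * pb none y l) := by
          rw [Finset.sum_mul]
          refine Finset.sum_congr rfl fun a _ => by ring
        rw [this, hpa1, one_mul]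
      have : ∑ a : Option A, ∑ l, μ l * pa a x l * pb none y l
          = ∑ a : Option A, effDist p pA pB η2 a none x y := by
        refine Finset.sum_congr rfl fun a _ => (hq a none x y).symm
      rw [hswap, this, Fintype.sum_option]
      simp only [effDist]
      rw [← Finset.mul_sum, hpAsum]
      ring
    match a, b with
    | some a, some b =>
      have h := hq (some a) (some b) x y
      simp only [effDist] at h ⊢
      have : ∑ l, μ l * (t * pa (some a) x l) * (t * pb (some b) y l)
          = t ^ 2 * ∑ l, μ l * pa (some a) x l * pb (some b) y l := by
        rw [Finset.mul_sum]
        exact Finset.sum_congr rfl fun l _ => by ring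
      rw [this, ← h, ← htη]
      ring
    | some a, none =>
      have h := hq (some a) none x y
      simp only [effDist] at h ⊢
      have expand : ∑ l, μ l * (t * pa (some a) x l) * (1 - t * (1 - pb none y l))
          = t * (1 - t) * (∑ l, μ l * pa (some a) x l)
            + t ^ 2 * (∑ l, μ l * pa (some a) x l * pb none y l) := by
        rw [Finset.mul_sum, Finset.mul_sum, ← Finset.sum_add_distrib]
        exact Finset.sum_congr rfl fun l _ => by ring
      rw [expand, hSa, ← h, ← htη]
      ring
    | none, some b =>
      have h := hq none (some b) x y
      simp only [effDist] at h ⊢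
      have expand : ∑ l, μ l * (1 - t * (1 - pa none x l)) * (t * pb (some b) y l)
          = t * (1 - t) * (∑ l, μ l * pb (some b) y l)
            + t ^ 2 * (∑ l, μ l * pa none x l * pb (some b) y l) := by
        rw [Finset.mul_sum, Finset.mul_sum, ← Finset.sum_add_distrib]
        exact Finset.sum_congr rfl fun l _ => by ring
      rw [expand, hSb, ← h, ← htη]
      ring
    | none, none =>
      have h := hq none none x y
      simp only [effDist] at h ⊢
      have expand : ∑ l, μ l * (1 - t * (1 - pa none x l)) * (1 - t * (1 - pb none y l))
          = (1 - t) ^ 2 * (∑ l, μ l)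
            + t * (1 - t) * (∑ l, μ l * pa none x l)
            + t * (1 - t) * (∑ l, μ l * pb none y l)
            + t ^ 2 * (∑ l, μ l * pa none x l * pb none y l) := by
        rw [Finset.mul_sum, Finset.mul_sum, Finset.mul_sum, Finset.mul_sum,
          ← Finset.sum_add_distrib, ← Finset.sum_add_distrib, ← Finset.sum_add_distrib]
        exact Finset.sum_congr rfl fun l _ => by ring
      rw [expand, hμ1, hS0a, hS0b, ← h, ← htη]
      ring
end

section
/- Let P be a prime with P ≥ max(M_A, M_B). The value of the Bell functional I (defined via f, g, h as in the paper) on the efficiency-η no-signaling strategy p(a,b|x,y) = (1/P)·1[a+b ≡ xy mod P] equals η²(M_A M_B − 1) − η(M_A + M_B − 2). -/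
/-- Bell coefficient for the bipartite inequality: `1` if `(x>1 ∨ y>1)` and
`a+b ≡ xy (mod P)`, `0` if `x=y=1` and `a+b ≡ xy`, `-P⁴` otherwise;
coefficients involving Φ (= `none`) vanish. -/
def bellCoeff (P : ℕ) : Option ℕ → Option ℕ → ℕ → ℕ → ℝ
  | some a, some b, x, y =>
      if (a + b) % P = (x * y) % P then (if x = 1 ∧ y = 1 then 0 else 1)
      else -(P : ℝ) ^ 4
  | _, _, _, _ => 0

/-- The efficiency-`η` version of the no-signaling strategy
`p(a,b|x,y) = (1/P)·1[a+b ≡ xy mod P]` (whose marginals are uniform `1/P`). -/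
noncomputable def nsEta (P : ℕ) (η : ℝ) : Option ℕ → Option ℕ → ℕ → ℕ → ℝ
  | some a, some b, x, y =>
      η ^ 2 * (if (a + b) % P = (x * y) % P then 1 / (P : ℝ) else 0)
  | some _, none, _, _ => η * (1 - η) * (1 / (P : ℝ))
  | none, some _, _, _ => η * (1 - η) * (1 / (P : ℝ))
  | none, none, _, _ => (1 - η) ^ 2

/-- Outcome alphabet `{0,…,P−1} ∪ {Φ}`. -/
def optOut (P : ℕ) : Finset (Option ℕ) := insert none ((Finset.range P).image some)

lemma filter_card_eq_one (P : ℕ) (hP : 0 < P) (a r : ℕ) :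
    ((Finset.range P).filter (fun b => (a + b) % P = r % P)).card = 1 := by
  haveI : NeZero P := ⟨hP.ne'⟩
  rw [Finset.card_eq_one]
  refine ⟨((r : ZMod P) - (a : ZMod P)).val, ?_⟩
  ext b
  simp only [Finset.mem_filter, Finset.mem_range, Finset.mem_singleton]
  constructor
  · rintro ⟨hb, h⟩
    have h2 : ((a + b : ℕ) : ZMod P) = (r : ℕ) := by
      rw [ZMod.natCast_eq_natCast_iff]; exact h
    push_cast at h2
    have hb2 : (b : ZMod P) = (r : ZMod P) - a := by linear_combination h2
    rw [← ZMod.val_cast_of_lt hb, hb2]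
  · rintro rfl
    refine ⟨ZMod.val_lt _, ?_⟩
    exact (ZMod.natCast_eq_natCast_iff _ _ _).mp
      (by push_cast [ZMod.natCast_val, ZMod.cast_id]; ring)

lemma sum_indicator (P : ℕ) (hP : 0 < P) (a r : ℕ) (v : ℝ) :
    ∑ b ∈ Finset.range P, (if (a + b) % P = r % P then v else 0) = v := by
  rw [← Finset.sum_filter, Finset.sum_const, filter_card_eq_one P hP a r, one_smul]

lemma sum_optOut (P : ℕ) (f : Option ℕ → ℝ) :
    ∑ a ∈ optOut P, f a = f none + ∑ a ∈ Finset.range P, f (some a) := by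
  rw [optOut, Finset.sum_insert (by simp), Finset.sum_image (by simp)]

theorem bell_value_of_ns_strategy (P MA MB : ℕ) (hP : P.Prime)
    (hA : 2 ≤ MA) (hB : 2 ≤ MB) (hPA : MA ≤ P) (hPB : MB ≤ P)
    (η : ℝ) (hη : η ∈ Set.Icc (0 : ℝ) 1) :
    (∑ x ∈ Finset.Icc 1 MA, ∑ y ∈ Finset.Icc 1 MB,
        ∑ a ∈ optOut P, ∑ b ∈ optOut P, bellCoeff P a b x y * nsEta P η a b x y)
      - (∑ x ∈ Finset.Icc 2 MA, ∑ a ∈ Finset.range P,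
          ∑ b ∈ optOut P, nsEta P η (some a) b x 1)
      - (∑ y ∈ Finset.Icc 2 MB, ∑ b ∈ Finset.range P,
          ∑ a ∈ optOut P, nsEta P η a (some b) 1 y)
    = η ^ 2 * ((MA : ℝ) * MB - 1) - η * ((MA : ℝ) + MB - 2) := by
  have hPpos := hP.pos
  have hPne : (P : ℝ) ≠ 0 := Nat.cast_ne_zero.mpr hPpos.ne'
  -- the inner Bell sum
  have hinner : ∀ x y : ℕ,
      ∑ a ∈ optOut P, ∑ b ∈ optOut P, bellCoeff P a b x y * nsEta P η a b x y
        = if x = 1 ∧ y = 1 then 0 else η ^ 2 := by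
    intro x y
    rw [sum_optOut]
    have h0 : ∑ b ∈ optOut P, bellCoeff P none b x y * nsEta P η none b x y = 0 := by
      apply Finset.sum_eq_zero; intro b _
      rcases b with _ | b <;> simp [bellCoeff]
    rw [h0, zero_add]
    have h1 : ∀ a : ℕ,
        ∑ b ∈ optOut P, bellCoeff P (some a) b x y * nsEta P η (some a) b x y
          = (if x = 1 ∧ y = 1 then 0 else η ^ 2) / P := by
      intro a
      rw [sum_optOut]
      have hnone : bellCoeff P (some a) none x y * nsEta P η (some a) none x y = 0 := by
        simp [bellCoeff]
      rw [hnone, zero_add]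
      have hterm : ∀ b : ℕ,
          bellCoeff P (some a) (some b) x y * nsEta P η (some a) (some b) x y
            = if (a + b) % P = (x * y) % P
                then (if x = 1 ∧ y = 1 then 0 else η ^ 2) / P else 0 := by
        intro b
        simp only [bellCoeff, nsEta]
        split_ifs <;> ring
      rw [Finset.sum_congr rfl fun b _ => hterm b]
      exact sum_indicator P hPpos a (x * y) _
    rw [Finset.sum_congr rfl fun a _ => h1 a, Finset.sum_const, Finset.card_range,
      nsmul_eq_mul]
    split_ifs <;> field_simp
  -- the marginal sums
  have hmargA : ∀ x : ℕ,
      ∑ a ∈ Finset.range P, ∑ b ∈ optOut P, nsEta P η (some a) b x 1 = η := by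
    intro x
    have h1 : ∀ a : ℕ, ∑ b ∈ optOut P, nsEta P η (some a) b x 1 = η / P := by
      intro a
      rw [sum_optOut]
      have : ∀ b : ℕ, nsEta P η (some a) (some b) x 1
          = if (a + b) % P = (x * 1) % P then η ^ 2 / P else 0 := by
        intro b; simp only [nsEta]; split_ifs <;> ring
      rw [Finset.sum_congr rfl fun b _ => this b, sum_indicator P hPpos a (x * 1) _]
      show η * (1 - η) * (1 / (P : ℝ)) + η ^ 2 / P = η / P
      field_simp; ring
    rw [Finset.sum_congr rfl fun a _ => h1 a, Finset.sum_const, Finset.card_range,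
      nsmul_eq_mul]
    field_simp
  have hmargB : ∀ y : ℕ,
      ∑ b ∈ Finset.range P, ∑ a ∈ optOut P, nsEta P η a (some b) 1 y = η := by
    intro y
    have h1 : ∀ b : ℕ, ∑ a ∈ optOut P, nsEta P η a (some b) 1 y = η / P := by
      intro b
      rw [sum_optOut]
      have : ∀ a : ℕ, nsEta P η (some a) (some b) 1 y
          = if (b + a) % P = (1 * y) % P then η ^ 2 / P else 0 := by
        intro a; simp only [nsEta, Nat.add_comm a b]; split_ifs <;> ring
      rw [Finset.sum_congr rfl fun a _ => this a, sum_indicator P hPpos b (1 * y) _]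
      show η * (1 - η) * (1 / (P : ℝ)) + η ^ 2 / P = η / P
      field_simp; ring
    rw [Finset.sum_congr rfl fun b _ => h1 b, Finset.sum_const, Finset.card_range,
      nsmul_eq_mul]
    field_simp
  rw [Finset.sum_congr rfl fun x _ => Finset.sum_congr rfl fun y _ => hinner x y,
    Finset.sum_congr rfl fun x _ => hmargA x,
    Finset.sum_congr rfl fun y _ => hmargB y]
  have h1A : (1 : ℕ) ∈ Finset.Icc 1 MA := by simp [Finset.mem_Icc]; omega
  have h1B : (1 : ℕ) ∈ Finset.Icc 1 MB := by simp [Finset.mem_Icc]; omega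
  have step : ∀ x ∈ Finset.Icc 1 MA,
      ∑ y ∈ Finset.Icc 1 MB, (if x = 1 ∧ y = 1 then (0:ℝ) else η ^ 2)
        = (MB : ℝ) * η ^ 2 - (if x = 1 then η ^ 2 else 0) := by
    intro x _
    have h : ∀ y : ℕ, (if x = 1 ∧ y = 1 then (0:ℝ) else η ^ 2)
        = η ^ 2 - (if y = 1 then (if x = 1 then η ^ 2 else 0) else 0) := by
      intro y; split_ifs <;> simp_all
    rw [Finset.sum_congr rfl fun y _ => h y, Finset.sum_sub_distrib, Finset.sum_const,
      Finset.sum_ite_eq' (Finset.Icc 1 MB) 1, if_pos h1B, Nat.card_Icc,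
      show (MB + 1 - 1 : ℕ) = MB by omega, nsmul_eq_mul]
  rw [Finset.sum_congr rfl step, Finset.sum_sub_distrib, Finset.sum_const,
    Finset.sum_ite_eq' (Finset.Icc 1 MA) 1, if_pos h1A, Nat.card_Icc,
    show (MA + 1 - 1 : ℕ) = MA by omega, nsmul_eq_mul, Finset.sum_const, Nat.card_Icc,
    Finset.sum_const, Nat.card_Icc, nsmul_eq_mul, nsmul_eq_mul]
  have c2A : ((MA + 1 - 2 : ℕ) : ℝ) = (MA : ℝ) - 1 := by
    have h : (MA + 1 - 2 : ℕ) = MA - 1 := by omega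
    rw [h, Nat.cast_sub (by omega)]; simp
  have c2B : ((MB + 1 - 2 : ℕ) : ℝ) = (MB : ℝ) - 1 := by
    have h : (MB + 1 - 2 : ℕ) = MB - 1 := by omega
    rw [h, Nat.cast_sub (by omega)]; simp
  rw [c2A, c2B]
  ring
end

section
/- Let P be a prime with P > max(M_1,...,M_N), N ≥ 2. Define the multipartite Bell functional I with coefficients f(a⃗,x⃗) = 1 if (∃t, x_t ≠ 1) and Σa_j ≡ Πx_i (mod P); f = 0 if all x_t = 1 and Σa_i ≡ Πx_i; f = −P^{2N} otherwise; and penalty terms g_i(a_i, x_i) = −1 for x_i > 1 (0 for x_i = 1). Then for every deterministic local strategy (F_1,...,F_N) with F_i: {1,...,M_i} → {0,...,P−1} ∪ {Φ}, the value of I is at most 0. -/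
/-- Multipartite Bell coefficient: for fully detected outputs `a⃗`,
`1` if `(∃t, x_t ≠ 1)` and `Σa_j ≡ Πx_i (mod P)`, `0` if all `x_t = 1` and
`Σa_i ≡ Πx_i`, `-P^{2N}` otherwise; any Φ (= `none`) output gives `0`. -/
def multiBellCoeff (P N : ℕ) (av : Fin N → Option ℕ) (x : Fin N → ℕ) : ℝ :=
  if ∀ i, (av i).isSome then
    (if (∑ i, (av i).getD 0) % P = (∏ i, x i) % P then
        (if ∀ i, x i = 1 then 0 else 1)
      else -(P : ℝ) ^ (2 * N))
  else 0

lemma multiBellCoeff_le_one (P N : ℕ) (av : Fin N → Option ℕ) (x : Fin N → ℕ) :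
    multiBellCoeff P N av x ≤ 1 := by
  have h : (0:ℝ) ≤ (P:ℝ) ^ (2*N) := by positivity
  unfold multiBellCoeff
  split_ifs <;> linarith

lemma upd_sum {β : Type*} [AddCommMonoid β] {N : ℕ} (G : Fin N → ℕ → β)
    (y : Fin N → ℕ) {i j : Fin N} (hij : i ≠ j) (u v : ℕ) :
    ∑ k, G k (Function.update (Function.update y i u) j v k)
      = G j v + (G i u + ∑ k ∈ (Finset.univ.erase j).erase i, G k (y k)) := by
  rw [← Finset.add_sum_erase _ _ (Finset.mem_univ j), Function.update_self]
  congr 1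
  have h1 : ∀ k ∈ Finset.univ.erase j,
      G k (Function.update (Function.update y i u) j v k)
        = G k (Function.update y i u k) := fun k hk => by
    rw [Function.update_of_ne (Finset.mem_erase.mp hk).1]
  rw [Finset.sum_congr rfl h1,
    ← Finset.add_sum_erase _ _ (Finset.mem_erase.mpr ⟨hij, Finset.mem_univ i⟩),
    Function.update_self]
  congr 1
  exact Finset.sum_congr rfl fun k hk => by
    rw [Function.update_of_ne (Finset.mem_erase.mp hk).1]

lemma upd_prod {β : Type*} [CommMonoid β] {N : ℕ} (G : Fin N → ℕ → β)
    (y : Fin N → ℕ) {i j : Fin N} (hij : i ≠ j) (u v : ℕ) :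
    ∏ k, G k (Function.update (Function.update y i u) j v k)
      = G j v * (G i u * ∏ k ∈ (Finset.univ.erase j).erase i, G k (y k)) := by
  rw [← Finset.mul_prod_erase _ _ (Finset.mem_univ j), Function.update_self]
  congr 1
  have h1 : ∀ k ∈ Finset.univ.erase j,
      G k (Function.update (Function.update y i u) j v k)
        = G k (Function.update y i u k) := fun k hk => by
    rw [Function.update_of_ne (Finset.mem_erase.mp hk).1]
  rw [Finset.prod_congr rfl h1,
    ← Finset.mul_prod_erase _ _ (Finset.mem_erase.mpr ⟨hij, Finset.mem_univ i⟩),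
    Function.update_self]
  congr 1
  exact Finset.prod_congr rfl fun k hk => by
    rw [Function.update_of_ne (Finset.mem_erase.mp hk).1]

theorem multipartite_deterministic_nonpositive (P N : ℕ) (hP : P.Prime) (hN : 2 ≤ N)
    (M : Fin N → ℕ) (hM : ∀ i, 2 ≤ M i) (hPM : ∀ i, M i < P)
    (F : Fin N → ℕ → Option ℕ)
    (hF : ∀ i x a, F i x = some a → a < P) :
    (∑ x ∈ Fintype.piFinset fun i => Finset.Icc 1 (M i),
        multiBellCoeff P N (fun i => F i (x i)) x)
      - ∑ i, (((Finset.Icc 2 (M i)).filter (fun t => F i t ≠ none)).card : ℝ) ≤ 0 := by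
  classical
  haveI : Fact P.Prime := ⟨hP⟩
  set S : Fin N → Finset ℕ :=
    fun i => (Finset.Icc 1 (M i)).filter (fun t => (F i t).isSome) with hSdef
  have hSmem : ∀ k t, t ∈ S k ↔ (t ∈ Finset.Icc 1 (M k) ∧ (F k t).isSome) := by
    intro k t; rw [hSdef]; exact Finset.mem_filter
  have hSsub : ∀ k, S k ⊆ Finset.Icc 1 (M k) := fun k => by
    rw [hSdef]; exact Finset.filter_subset _ _
  have hSsome : ∀ k t, t ∈ S k → (F k t).isSome := fun k t ht => ((hSmem k t).mp ht).2
  have hpen_erase : ∀ i,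
      (Finset.Icc 2 (M i)).filter (fun t => F i t ≠ none) = (S i).erase 1 := by
    intro i
    ext t
    simp only [Finset.mem_filter, Finset.mem_erase, Finset.mem_Icc,
      Option.ne_none_iff_isSome, hSmem]
    constructor
    · rintro ⟨⟨h2, h3⟩, h4⟩
      exact ⟨by omega, ⟨by omega, h3⟩, h4⟩
    · rintro ⟨h1, ⟨h2, h3⟩, h4⟩
      exact ⟨⟨by omega, h3⟩, h4⟩
  rw [sub_nonpos]
  have hRHS : ∑ i, ((((Finset.Icc 2 (M i)).filter (fun t => F i t ≠ none)).card : ℝ))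
      = ∑ i, (((S i).erase 1).card : ℝ) :=
    Finset.sum_congr rfl fun i _ => by rw [hpen_erase i]
  rw [hRHS]
  have hpen0 : (0:ℝ) ≤ ∑ i, (((S i).erase 1).card : ℝ) :=
    Finset.sum_nonneg fun i _ => Nat.cast_nonneg _
  by_cases hne : ∀ k, (S k).Nonempty
  swap
  · -- some party never detects: every coefficient is 0
    push_neg at hne
    obtain ⟨k, hk⟩ := hne
    have hz : ∀ x ∈ Fintype.piFinset (fun i => Finset.Icc 1 (M i)),
        multiBellCoeff P N (fun i => F i (x i)) x = 0 := by
      intro x hx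
      rw [multiBellCoeff, if_neg]
      intro hall
      have hmem : x k ∈ S k := (hSmem k (x k)).mpr ⟨Fintype.mem_piFinset.mp hx k, hall k⟩
      rw [hk] at hmem
      exact absurd hmem (Finset.notMem_empty _)
    rw [Finset.sum_congr rfl hz, Finset.sum_const_zero]
    exact hpen0
  by_cases hA : ∃ i, ∃ j, i ≠ j ∧ 2 ≤ (S i).card ∧ 2 ≤ (S j).card
  · obtain ⟨i, j, hij, hci, hcj⟩ := hA
    by_cases hbad : ∃ x ∈ Fintype.piFinset (fun i => Finset.Icc 1 (M i)),
        (∀ k, (F k (x k)).isSome) ∧ (∑ k, (F k (x k)).getD 0) % P ≠ (∏ k, x k) % P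
    · -- a bad input exists: the huge negative coefficient dominates
      obtain ⟨xb, hxb, hsome, hneq⟩ := hbad
      have hcoeff : multiBellCoeff P N (fun i => F i (xb i)) xb = -(P:ℝ) ^ (2*N) := by
        rw [multiBellCoeff, if_pos hsome, if_neg hneq]
      have hcard : ((Fintype.piFinset (fun i => Finset.Icc 1 (M i))).erase xb).card + 1
          ≤ P ^ (2*N) := by
        have h1 : (Fintype.piFinset (fun i => Finset.Icc 1 (M i))).card = ∏ i, M i := by
          rw [Fintype.card_piFinset]
          exact Finset.prod_congr rfl fun i _ => by rw [Nat.card_Icc]; omega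
        have h2 : ∏ i, M i ≤ P ^ N := by
          calc ∏ i, M i ≤ ∏ _i : Fin N, P :=
                Finset.prod_le_prod' fun i _ => (hPM i).le
            _ = P ^ N := by simp
        have h3 : P ^ N ≤ P ^ (2*N) := Nat.pow_le_pow_right hP.pos (by omega)
        have h4 : 1 ≤ ∏ i, M i := Finset.one_le_prod' fun i _ => by have := hM i; omega
        rw [Finset.card_erase_of_mem hxb, h1]
        omega
      calc ∑ x ∈ Fintype.piFinset (fun i => Finset.Icc 1 (M i)),
              multiBellCoeff P N (fun i => F i (x i)) x
          = multiBellCoeff P N (fun i => F i (xb i)) xb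
            + ∑ x ∈ (Fintype.piFinset (fun i => Finset.Icc 1 (M i))).erase xb,
                multiBellCoeff P N (fun i => F i (x i)) x :=
            (Finset.add_sum_erase _ _ hxb).symm
        _ ≤ -(P:ℝ) ^ (2*N)
            + ∑ _x ∈ (Fintype.piFinset (fun i => Finset.Icc 1 (M i))).erase xb, (1:ℝ) := by
            rw [hcoeff]
            exact add_le_add le_rfl (Finset.sum_le_sum fun x _ => multiBellCoeff_le_one P N _ _)
        _ = -(P:ℝ) ^ (2*N)
            + ((Fintype.piFinset (fun i => Finset.Icc 1 (M i))).erase xb).card := by simp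
        _ ≤ 0 := by
            have : (((Fintype.piFinset (fun i => Finset.Icc 1 (M i))).erase xb).card : ℝ) + 1
                ≤ (P:ℝ) ^ (2*N) := by exact_mod_cast hcard
            linarith
        _ ≤ ∑ i, (((S i).erase 1).card : ℝ) := hpen0
    · -- no bad input: derive a contradiction from four congruences
      exfalso
      push_neg at hbad
      obtain ⟨s, hs, s', hs', hss⟩ := Finset.one_lt_card.mp hci
      obtain ⟨t, ht, t', ht', htt⟩ := Finset.one_lt_card.mp hcj
      set x₀ : Fin N → ℕ := fun k => (hne k).choose with hx₀def
      have hx₀ : ∀ k, x₀ k ∈ S k := fun k => (hne k).choose_spec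
      set Cz : ZMod P := ∏ k ∈ (Finset.univ.erase j).erase i, ((x₀ k : ℕ) : ZMod P) with hCz
      set Dz : ZMod P := ∑ k ∈ (Finset.univ.erase j).erase i,
        ((F k (x₀ k)).getD 0 : ZMod P) with hDz
      have key : ∀ u ∈ S i, ∀ v ∈ S j,
          ((F j v).getD 0 : ZMod P) + (((F i u).getD 0 : ZMod P) + Dz)
            = (v : ZMod P) * ((u : ZMod P) * Cz) := by
        intro u hu v hv
        set X := Function.update (Function.update x₀ i u) j v with hX
        have hmem : ∀ k, X k ∈ S k := by
          intro k
          rcases eq_or_ne k j with rfl | hkj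
          · rw [hX, Function.update_self]; exact hv
          · rcases eq_or_ne k i with rfl | hki
            · rw [hX, Function.update_of_ne hkj, Function.update_self]; exact hu
            · rw [hX, Function.update_of_ne hkj, Function.update_of_ne hki]; exact hx₀ k
        have hXpi : X ∈ Fintype.piFinset (fun i => Finset.Icc 1 (M i)) :=
          Fintype.mem_piFinset.mpr fun k => hSsub k (hmem k)
        have hXsome : ∀ k, (F k (X k)).isSome := fun k => hSsome k _ (hmem k)
        have hcong := hbad X hXpi hXsome
        have hz : ((∑ k, (F k (X k)).getD 0 : ℕ) : ZMod P) = ((∏ k, X k : ℕ) : ZMod P) :=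
          (ZMod.natCast_eq_natCast_iff _ _ _).mpr hcong
        push_cast at hz
        have e1 : ∑ k, ((F k (X k)).getD 0 : ZMod P)
            = ((F j v).getD 0 : ZMod P) + (((F i u).getD 0 : ZMod P) + Dz) := by
          rw [hDz, hX]
          exact upd_sum (fun k a => ((F k a).getD 0 : ZMod P)) x₀ hij u v
        have e2 : ∏ k, ((X k : ℕ) : ZMod P)
            = (v : ZMod P) * ((u : ZMod P) * Cz) := by
          rw [hCz, hX]
          exact upd_prod (fun _ a => ((a : ℕ) : ZMod P)) x₀ hij u v
        rw [e1, e2] at hz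
        exact hz
      have h1 := key s hs t ht
      have h2 := key s hs t' ht'
      have h3 := key s' hs' t ht
      have h4 := key s' hs' t' ht'
      have hCne : Cz ≠ 0 := by
        rw [hCz]
        refine Finset.prod_ne_zero_iff.mpr fun k _ => fun h0 => ?_
        have hdvd : P ∣ x₀ k := (ZMod.natCast_eq_zero_iff _ _).mp h0
        have hIcc := Finset.mem_Icc.mp (hSsub k (hx₀ k))
        have hle := Nat.le_of_dvd (by omega) hdvd
        have := hPM k
        omega
      have hcastne : ∀ a b : ℕ, a ∈ S i ∪ S j → b ∈ S i ∪ S j → a ≠ b →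
          (a : ZMod P) ≠ (b : ZMod P) := by
        intro a b ha hb hab h
        have hlt : ∀ c : ℕ, c ∈ S i ∪ S j → c < P := by
          intro c hc
          rcases Finset.mem_union.mp hc with hc | hc
          · exact lt_of_le_of_lt (Finset.mem_Icc.mp (hSsub i hc)).2 (hPM i)
          · exact lt_of_le_of_lt (Finset.mem_Icc.mp (hSsub j hc)).2 (hPM j)
        have := congrArg ZMod.val h
        rw [ZMod.val_cast_of_lt (hlt a ha), ZMod.val_cast_of_lt (hlt b hb)] at this
        exact hab this
      have hsval : (s : ZMod P) ≠ (s' : ZMod P) :=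
        hcastne s s' (Finset.mem_union_left _ hs) (Finset.mem_union_left _ hs') hss
      have htval : (t : ZMod P) ≠ (t' : ZMod P) :=
        hcastne t t' (Finset.mem_union_right _ ht) (Finset.mem_union_right _ ht') htt
      have hzero : ((s:ZMod P) - s') * ((t:ZMod P) - t') * Cz = 0 := by
        linear_combination h2 + h3 - h1 - h4
      exact (mul_ne_zero (mul_ne_zero (sub_ne_zero.mpr hsval) (sub_ne_zero.mpr htval))
        hCne) hzero
  · -- at most one party detects more than one input
    push_neg at hA
    obtain ⟨j, hsml⟩ : ∃ j : Fin N, ∀ i, i ≠ j → (S i).card ≤ 1 := by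
      by_cases hbig : ∃ j, 2 ≤ (S j).card
      · obtain ⟨j, hj⟩ := hbig
        refine ⟨j, fun i hi => ?_⟩
        by_contra h
        exact absurd hj (by have := hA i j hi (by omega); omega)
      · push_neg at hbig
        exact ⟨⟨0, by omega⟩, fun i _ => by have := hbig i; omega⟩
    set c : Fin N → ℕ := fun k => (hne k).choose with hcdef
    have hc : ∀ k, c k ∈ S k := fun k => (hne k).choose_spec
    have huniq : ∀ i, i ≠ j → ∀ t ∈ S i, t = c i := fun i hi t ht =>
      Finset.card_le_one.mp (hsml i hi) t ht (c i) (hc i)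
    set bnd : (Fin N → ℕ) → ℝ := fun x =>
      if (∀ k, (F k (x k)).isSome) then (if ∀ k, x k = 1 then 0 else 1) else 0 with hbnd
    have hble : ∀ x : Fin N → ℕ,
        multiBellCoeff P N (fun i => F i (x i)) x ≤ bnd x := by
      intro x
      have h : (0:ℝ) ≤ (P:ℝ) ^ (2*N) := by positivity
      simp only [multiBellCoeff, hbnd]
      split_ifs <;> linarith
    have hsub : Fintype.piFinset S ⊆ Fintype.piFinset (fun i => Finset.Icc 1 (M i)) := by
      intro x hx
      exact Fintype.mem_piFinset.mpr fun k => hSsub k (Fintype.mem_piFinset.mp hx k)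
    have hstep2 : ∑ x ∈ Fintype.piFinset (fun i => Finset.Icc 1 (M i)), bnd x
        = ∑ x ∈ Fintype.piFinset S, bnd x := by
      refine (Finset.sum_subset hsub ?_).symm
      intro x hx hxn
      simp only [hbnd]
      rw [if_neg]
      intro hall
      exact hxn (Fintype.mem_piFinset.mpr fun k =>
        (hSmem k (x k)).mpr ⟨Fintype.mem_piFinset.mp hx k, hall k⟩)
    have hxeq : ∀ x ∈ Fintype.piFinset S, x = Function.update c j (x j) := by
      intro x hx
      funext k
      rcases eq_or_ne k j with rfl | hk
      · rw [Function.update_self]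
      · rw [Function.update_of_ne hk]
        exact huniq k hk (x k) (Fintype.mem_piFinset.mp hx k)
    have hupdmem : ∀ t ∈ S j, Function.update c j t ∈ Fintype.piFinset S := by
      intro t ht
      refine Fintype.mem_piFinset.mpr fun k => ?_
      rcases eq_or_ne k j with rfl | hk
      · rw [Function.update_self]; exact ht
      · rw [Function.update_of_ne hk]; exact hc k
    have hval : ∀ x ∈ Fintype.piFinset S,
        bnd x = (if ∀ k, Function.update c j (x j) k = 1 then (0:ℝ) else 1) := by
      intro x hx
      simp only [hbnd]
      rw [if_pos fun k => hSsome k _ (Fintype.mem_piFinset.mp hx k), ← hxeq x hx]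
    have hstep3 : ∑ x ∈ Fintype.piFinset S, bnd x
        = ∑ t ∈ S j, (if ∀ k, Function.update c j t k = 1 then (0:ℝ) else 1) :=
      Finset.sum_bij' (fun x _ => x j) (fun t _ => Function.update c j t)
        (fun x hx => Fintype.mem_piFinset.mp hx j)
        (fun t ht => hupdmem t ht)
        (fun x hx => (hxeq x hx).symm)
        (fun t _ => Function.update_self _ _ _)
        (fun x hx => hval x hx)
    by_cases hall : ∀ k, k ≠ j → c k = 1
    · have hiff : ∀ u : ℕ, (∀ k, Function.update c j u k = 1) ↔ u = 1 := by
        intro u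
        constructor
        · intro h
          have := h j
          rwa [Function.update_self] at this
        · intro hu k
          rcases eq_or_ne k j with rfl | hk
          · rw [Function.update_self]; exact hu
          · rw [Function.update_of_ne hk]; exact hall k hk
      have hstep4 : ∑ t ∈ S j, (if ∀ k, Function.update c j t k = 1 then (0:ℝ) else 1)
          = (((S j).erase 1).card : ℝ) := by
        calc ∑ u ∈ S j, (if ∀ k, Function.update c j u k = 1 then (0:ℝ) else 1)
            = ∑ u ∈ S j, (if u ≠ 1 then (1:ℝ) else 0) := by
              refine Finset.sum_congr rfl fun u _ => ?_
              rw [if_congr (hiff u) rfl rfl]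
              by_cases h : u = 1 <;> simp [h]
          _ = ∑ u ∈ (S j).filter (· ≠ 1), 1 := (Finset.sum_filter _ _).symm
          _ = (((S j).filter (· ≠ 1)).card : ℝ) := by simp
          _ = (((S j).erase 1).card : ℝ) := by rw [Finset.filter_ne']
      calc ∑ x ∈ Fintype.piFinset (fun i => Finset.Icc 1 (M i)),
              multiBellCoeff P N (fun i => F i (x i)) x
          ≤ ∑ x ∈ Fintype.piFinset (fun i => Finset.Icc 1 (M i)), bnd x :=
            Finset.sum_le_sum fun x _ => hble x
        _ = (((S j).erase 1).card : ℝ) := by rw [hstep2, hstep3, hstep4]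
        _ ≤ ∑ i, (((S i).erase 1).card : ℝ) :=
            Finset.single_le_sum (f := fun i => (((S i).erase 1).card : ℝ))
              (fun i _ => Nat.cast_nonneg _) (Finset.mem_univ j)
    · push_neg at hall
      obtain ⟨i₀, hi₀j, hci₀⟩ := hall
      have hcardnat : (S j).card ≤ ((S j).erase 1).card + ((S i₀).erase 1).card := by
        have h1 : (S j).card - 1 ≤ ((S j).erase 1).card := Finset.pred_card_le_card_erase
        have h2 : 1 ≤ ((S i₀).erase 1).card :=
          Finset.card_pos.mpr ⟨c i₀, Finset.mem_erase.mpr ⟨hci₀, hc i₀⟩⟩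
        have h3 : 1 ≤ (S j).card := Finset.card_pos.mpr (hne j)
        omega
      have hpair : (((S j).erase 1).card : ℝ) + (((S i₀).erase 1).card : ℝ)
          ≤ ∑ i, (((S i).erase 1).card : ℝ) := by
        have hsp : ∑ i ∈ ({j, i₀} : Finset (Fin N)), (((S i).erase 1).card : ℝ)
            = (((S j).erase 1).card : ℝ) + (((S i₀).erase 1).card : ℝ) :=
          Finset.sum_pair (Ne.symm hi₀j)
        rw [← hsp]
        exact Finset.sum_le_sum_of_subset_of_nonneg (Finset.subset_univ _)
          (fun k _ _ => Nat.cast_nonneg _)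
      calc ∑ x ∈ Fintype.piFinset (fun i => Finset.Icc 1 (M i)),
              multiBellCoeff P N (fun i => F i (x i)) x
          ≤ ∑ x ∈ Fintype.piFinset (fun i => Finset.Icc 1 (M i)), bnd x :=
            Finset.sum_le_sum fun x _ => hble x
        _ = ∑ t ∈ S j, (if ∀ k, Function.update c j t k = 1 then (0:ℝ) else 1) := by
            rw [hstep2, hstep3]
        _ ≤ ∑ _t ∈ S j, (1:ℝ) := Finset.sum_le_sum fun u _ => by split_ifs <;> norm_num
        _ = ((S j).card : ℝ) := by simp
        _ ≤ ∑ i, (((S i).erase 1).card : ℝ) := by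
            have : ((S j).card : ℝ) ≤ (((S j).erase 1).card : ℝ) + (((S i₀).erase 1).card : ℝ) := by
              exact_mod_cast hcardnat
            linarith
end
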